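/- Let d ≥ 1 be an integer and 0 < p_i ≤ u_i < ∞ for i = 1, 2, with p1 < p2 and p1/u1 < p2/u2 (so in particular p1 < u1). Then there exists a constant c > 0 such that for all j ∈ ℕ: e_{k_j}(id_j) ≥ c · 2^{jd(1/u2 − p1/(u1·p2))}, where k_j = ⌊2^{jd(1 − p1/u1)}⌋. -/

import Mathlib

open scoped ENNReal NNReal

noncomputable section

/-- `Q_{j,m} ⊆ Q = [0,1)^d` iff `0 ≤ m i < 2^j` for every coordinate `i`. -/
def inUnitCube (d j : ℕ) (m : Fin d → ℤ) : Prop :=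
  ∀ i, 0 ≤ m i ∧ m i < 2 ^ j

/-- For `ν ≤ j`: `Q_{j,m} ⊆ Q_{ν,k}`. -/
def cubeSub (d j ν : ℕ) (m k : Fin d → ℤ) : Prop :=
  ∀ i, k i * 2 ^ (j - ν) ≤ m i ∧ m i < (k i + 1) * 2 ^ (j - ν)

/-- The finite-dimensional Morrey quasi-norm `‖· | m^{2^{jd}}_{u,p}‖` (`ℝ≥0∞`-valued),
on coefficients indexed by the `m ∈ ℤ^d` with `Q_{j,m} ⊆ Q` (other coordinates are ignored). -/
def mNorm (d : ℕ) (u p : ℝ) (j : ℕ) (lam : (Fin d → ℤ) → ℂ) : ℝ≥0∞ :=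
  ⨆ νk : {νk : ℕ × (Fin d → ℤ) // νk.1 ≤ j ∧ inUnitCube d νk.1 νk.2},
    (2 : ℝ≥0∞) ^ ((d : ℝ) * ((j : ℝ) - (νk.1.1 : ℝ)) * (1 / u - 1 / p)) *
      (∑' m : {m : Fin d → ℤ // cubeSub d j νk.1.1 m νk.1.2},
        ((‖lam m.1‖₊ : ℝ≥0∞)) ^ p) ^ (1 / p)

/-- The `ℓ_q^{2^{jd}}` quasi-norm (`0 < q < ∞`) on level-`j` coefficients. -/
def lqNorm (d : ℕ) (q : ℝ) (j : ℕ) (lam : (Fin d → ℤ) → ℂ) : ℝ≥0∞ :=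
  (∑' m : {m : Fin d → ℤ // inUnitCube d j m}, ((‖lam m.1‖₊ : ℝ≥0∞)) ^ q) ^ (1 / q)

/-- The quasi-norm of the sequence space `ñ^σ_{u,p,q}(Q)`, `q ∈ (0,∞]`. -/
def nNorm (d : ℕ) (σ u p : ℝ) (q : ℝ≥0∞) (lam : ℕ → (Fin d → ℤ) → ℂ) : ℝ≥0∞ :=
  if q = ∞ then
    ⨆ j : ℕ, (2 : ℝ≥0∞) ^ ((j : ℝ) * (σ - d / u)) * mNorm d u p j (lam j)
  else
    (∑' j : ℕ, ((2 : ℝ≥0∞) ^ ((j : ℝ) * (σ - d / u)) * mNorm d u p j (lam j)) ^ q.toReal) ^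
      (1 / q.toReal)

/-- `k`-th entropy number of the identity map between two quasi-norms on one ambient group:
the infimum of all `ε > 0` such that the `N₁`-unit ball is covered by `2^(k-1)` `N₂`-balls of
radius `ε`. -/
def entropyNumber {Λ : Type*} [AddCommGroup Λ] (N₁ N₂ : Λ → ℝ≥0∞) (k : ℕ) : ℝ≥0∞ :=
  sInf {ε : ℝ≥0∞ | 0 < ε ∧ ∃ c : Fin (2 ^ (k - 1)) → Λ,
    ∀ x : Λ, N₁ x ≤ 1 → ∃ i, N₂ (x - c i) ≤ ε}

/-- Operator quasi-norm of the identity map between two quasi-norms on one ambient space: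
the smallest `C` with `N₂ x ≤ C · N₁ x` for all `x`. -/
def opNorm {Λ : Type*} (N₁ N₂ : Λ → ℝ≥0∞) : ℝ≥0∞ :=
  sInf {C : ℝ≥0∞ | ∀ x, N₂ x ≤ C * N₁ x}

end


open Finset

lemma hammingDist_eq_card {K : ℕ} (f g : Fin K → Bool) :
    hammingDist f g = (univ.filter fun i => f i ≠ g i).card := rfl

lemma hamming_ball_card_le {K : ℕ} (g : Fin K → Bool) (r : ℕ) :
    ((univ : Finset (Fin K → Bool)).filter fun f => hammingDist g f ≤ r).card
      ≤ ((univ : Finset (Fin K)).powerset.filter fun s => s.card ≤ r).card := by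
  apply Finset.card_le_card_of_injOn (fun f => univ.filter fun i => f i ≠ g i)
  · intro f hf
    simp only [mem_coe, mem_filter, mem_univ, true_and] at hf ⊢
    refine ⟨mem_powerset.2 (subset_univ _), ?_⟩
    rw [hammingDist_eq_card] at hf
    refine le_trans (le_of_eq ?_) hf
    congr 1
    ext i
    simp [ne_comm]
  · intro f _ f' _ h
    funext i
    have := Finset.ext_iff.1 h i
    simp only [mem_filter, mem_univ, true_and] at this
    revert this
    cases hf : f i <;> cases hf' : f' i <;> cases hg : g i <;> simp

lemma card_small_powerset_mul_le {K r : ℕ} (hr : r ≤ K) :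
    ((univ : Finset (Fin K)).powerset.filter fun s => s.card ≤ r).card * 7 ^ (K - r)
      ≤ 8 ^ K := by
  have hcard : ((univ : Finset (Fin K)).powerset.filter fun s => s.card ≤ r).card
      = ∑ i ∈ range (r+1), K.choose i := by
    have : ((univ : Finset (Fin K)).powerset.filter fun s => s.card ≤ r)
        = (range (r+1)).biUnion (fun i => Finset.powersetCard i (univ : Finset (Fin K))) := by
      ext s
      simp only [mem_filter, mem_powerset, mem_biUnion, mem_range, Finset.mem_powersetCard]
      constructor
      · rintro ⟨hs, hc⟩; exact ⟨s.card, by omega, hs, rfl⟩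
      · rintro ⟨i, hi, hs, rfl⟩; exact ⟨hs, by omega⟩
    rw [this, Finset.card_biUnion]
    · refine Finset.sum_congr rfl fun i _ => ?_
      rw [Finset.card_powersetCard, Finset.card_univ, Fintype.card_fin]
    · intro i _ j _ hij
      apply Finset.disjoint_left.2
      intro s hs hs'
      rw [Finset.mem_powersetCard] at hs hs'
      exact hij (hs.2 ▸ hs'.2 ▸ rfl)
  rw [hcard, Finset.sum_mul]
  calc ∑ i ∈ range (r+1), K.choose i * 7 ^ (K - r)
      ≤ ∑ i ∈ range (r+1), K.choose i * 7 ^ (K - i) := by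
        refine Finset.sum_le_sum fun i hi => ?_
        have : K - r ≤ K - i := by simp only [mem_range] at hi; omega
        exact Nat.mul_le_mul_left _ (Nat.pow_le_pow_right (by norm_num) this)
    _ ≤ ∑ i ∈ range (K+1), K.choose i * 7 ^ (K - i) := by
        apply Finset.sum_le_sum_of_subset
        exact Finset.range_subset_range.2 (by omega)
    _ ≤ ∑ i ∈ range (K+1), 1 ^ i * 7 ^ (K - i) * K.choose i := by
        apply le_of_eq; refine Finset.sum_congr rfl fun i _ => ?_; ring
    _ = 8 ^ K := by
        have h8 := (Commute.all (1:ℕ) 7).add_pow K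
        norm_num at h8
        rw [h8]
        exact Finset.sum_congr rfl fun i _ => by ring

lemma exists_code (k : ℕ) (hk : 1 ≤ k) :
    ∃ F : Finset (Fin (16*k) → Bool), 2^(k-1) < F.card ∧
      ∀ f ∈ F, ∀ g ∈ F, f ≠ g → k+1 ≤ hammingDist f g := by
  classical
  set K := 16*k with hK
  set P : Finset (Fin K → Bool) → Prop :=
    fun F => ∀ f ∈ F, ∀ g ∈ F, f ≠ g → k+1 ≤ hammingDist f g with hP
  have hSne : ((univ : Finset (Finset (Fin K → Bool))).filter P).Nonempty := by
    refine ⟨∅, ?_⟩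
    simp [hP]
  obtain ⟨F, hFmem, hFmax⟩ := Finset.exists_max_image _ Finset.card hSne
  simp only [mem_filter, mem_univ, true_and] at hFmem
  refine ⟨F, ?_, hFmem⟩
  -- covering property
  have hcover : ∀ g : Fin K → Bool, ∃ f ∈ F, hammingDist f g ≤ k := by
    intro g
    by_cases hgF : g ∈ F
    · exact ⟨g, hgF, by simp [hammingDist_self]⟩
    by_contra hcon
    push_neg at hcon
    have hins : P (insert g F) := by
      intro f hf f' hf' hne
      rcases Finset.mem_insert.1 hf with hfg | hf2
      · rcases Finset.mem_insert.1 hf' with hfg' | hf2'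
        · exact absurd (hfg.trans hfg'.symm) hne
        · rw [hfg, hammingDist_comm]; exact hcon f' hf2'
      · rcases Finset.mem_insert.1 hf' with hfg' | hf2'
        · rw [hfg']; exact hcon f hf2
        · exact hFmem f hf2 f' hf2' hne
    have := hFmax (insert g F) (Finset.mem_filter.2 ⟨Finset.mem_univ _, hins⟩)
    rw [Finset.card_insert_of_notMem hgF] at this
    omega
  -- counting
  have hunion : (univ : Finset (Fin K → Bool)) ⊆
      F.biUnion (fun f => univ.filter fun g => hammingDist f g ≤ k) := by
    intro g _
    obtain ⟨f, hf, hd⟩ := hcover g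
    exact Finset.mem_biUnion.2 ⟨f, hf, by simp [hd]⟩
  have hcard1 : (2:ℕ)^K ≤ F.card *
      ((univ : Finset (Fin K)).powerset.filter fun s => s.card ≤ k).card := by
    have h1 : ((univ : Finset (Fin K → Bool))).card ≤
        ∑ f ∈ F, (univ.filter fun g => hammingDist f g ≤ k).card :=
      le_trans (Finset.card_le_card hunion) (Finset.card_biUnion_le)
    have h2 : ∀ f ∈ F, (univ.filter fun g => hammingDist f g ≤ k).card ≤
        ((univ : Finset (Fin K)).powerset.filter fun s => s.card ≤ k).card :=
      fun f _ => hamming_ball_card_le f k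
    have h3 := le_trans h1 (Finset.sum_le_sum h2)
    rw [Finset.sum_const, smul_eq_mul] at h3
    calc (2:ℕ)^K = (univ : Finset (Fin K → Bool)).card := by
          rw [Finset.card_univ, Fintype.card_fun]; simp
      _ ≤ _ := h3
  have hV := card_small_powerset_mul_le (K := K) (r := k) (by omega)
  -- final arithmetic
  set V := ((univ : Finset (Fin K)).powerset.filter fun s => s.card ≤ k).card with hVdef
  by_contra hc
  push_neg at hc
  have h15 : K - k = 15*k := by omega
  rw [h15] at hV
  have hcard1' : (2:ℕ)^(16*k) ≤ F.card * V := hcard1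
  have hV' : V * 7^(15*k) ≤ 8^(16*k) := hV
  have e1 : (2:ℕ)^(49*k) ≤ 2^(k-1) * 2^(48*k) := by
    calc (2:ℕ)^(49*k) = 2^(16*k) * 2^(33*k) := by rw [← pow_add]; ring_nf
      _ ≤ 2^(16*k) * 7^(15*k) := by
          have : (2:ℕ)^(33*k) ≤ 7^(15*k) := by
            rw [pow_mul, pow_mul]
            exact Nat.pow_le_pow_left (by norm_num) k
          exact Nat.mul_le_mul le_rfl this
      _ ≤ (F.card * V) * 7^(15*k) := Nat.mul_le_mul hcard1' le_rfl
      _ = F.card * (V * 7^(15*k)) := by ring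
      _ ≤ 2^(k-1) * 8^(16*k) := Nat.mul_le_mul hc hV'
      _ = 2^(k-1) * 2^(48*k) := by
          rw [show (8:ℕ) = 2^3 by norm_num, ← pow_mul]
          congr 1
          ring
  rw [← pow_add] at e1
  have := (Nat.pow_le_pow_iff_right (by norm_num : 1 < 2)).1 e1
  omega

open scoped ENNReal NNReal


open Finset

lemma myTsum_subtype_le {γ : Type*} (P : γ → Prop) (g : γ → ℝ≥0∞) (S : Finset γ)
    (hsupp : ∀ m, P m → g m ≠ 0 → m ∈ S) (B : ℝ≥0∞) (hB : ∀ m, g m ≤ B) :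
    (∑' m : {m // P m}, g m.1) ≤ S.card * B := by
  classical
  rw [ENNReal.tsum_eq_iSup_sum]
  refine iSup_le fun t => ?_
  calc ∑ m ∈ t, g m.1
      = ∑ m ∈ t.filter (fun m => g m.1 ≠ 0), g m.1 := (Finset.sum_filter_ne_zero t).symm
    _ ≤ ∑ _m ∈ t.filter (fun m => g m.1 ≠ 0), B := Finset.sum_le_sum (fun m _ => hB m.1)
    _ = (t.filter (fun m => g m.1 ≠ 0)).card * B := by rw [Finset.sum_const, nsmul_eq_mul]
    _ ≤ S.card * B := by
        refine mul_le_mul_left ?_ B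
        refine Nat.cast_le.2 (Finset.card_le_card_of_injOn Subtype.val ?_ ?_)
        · intro m hm
          simp only [Finset.mem_coe, Finset.mem_filter] at hm
          exact hsupp m.1 m.2 hm.2
        · exact Subtype.val_injective.injOn
  -- note: m.1.2? subtype: m : {m // P m}: property m.2

lemma ofReal_norm_eq_coe_nnnorm {E : Type*} [SeminormedAddGroup E] (a : E) :
    ENNReal.ofReal ‖a‖ = (‖a‖₊ : ℝ≥0∞) := ENNReal.ofReal_eq_coe_nnreal _

lemma two_rpow_add (x y : ℝ) : (2:ℝ≥0∞)^(x+y) = 2^x * 2^y :=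
  ENNReal.rpow_add x y (by norm_num) (by norm_num)

lemma two_rpow_ne_top (x : ℝ) : (2:ℝ≥0∞)^x ≠ ⊤ := by
  simp [ENNReal.rpow_eq_top_iff]

lemma two_rpow_ne_zero (x : ℝ) : (2:ℝ≥0∞)^x ≠ 0 :=
  (ENNReal.rpow_pos (by norm_num) (by norm_num)).ne'

lemma add_rpow_le_two_rpow (s t : ℝ≥0∞) {p : ℝ} (hp : 0 < p) :
    (s+t)^p ≤ (2:ℝ≥0∞)^p * (s^p + t^p) := by
  have h1 : s + t ≤ 2 * (s ⊔ t) := by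
    rw [two_mul]; exact add_le_add le_sup_left le_sup_right
  calc (s+t)^p ≤ (2 * (s ⊔ t))^p := ENNReal.rpow_le_rpow h1 hp.le
    _ = 2^p * (s ⊔ t)^p := ENNReal.mul_rpow_of_nonneg _ _ hp.le
    _ ≤ 2^p * (s^p + t^p) := by
        refine mul_le_mul_right ?_ _
        rcases le_total s t with h | h
        · rw [sup_eq_right.2 h]; exact le_add_self
        · rw [sup_eq_left.2 h]; exact le_self_add

noncomputable def LL (d : ℕ) (u2 p2 : ℝ) (j : ℕ) (z : (Fin d → ℤ) → ℂ) : ℝ≥0∞ :=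
  (2 : ℝ≥0∞) ^ ((d : ℝ) * ((j : ℝ) - (((0:ℕ)) : ℝ)) * (1 / u2 - 1 / p2)) *
    (∑' m : {m : Fin d → ℤ // cubeSub d j 0 m (fun _ => 0)},
      ((‖z m.1‖₊ : ℝ≥0∞)) ^ p2) ^ (1 / p2)

lemma LL_le_mNorm (d : ℕ) (u2 p2 : ℝ) (j : ℕ) (z : (Fin d → ℤ) → ℂ) :
    LL d u2 p2 j z ≤ mNorm d u2 p2 j z := by
  have h0 : (0:ℕ) ≤ j ∧ inUnitCube d 0 (fun _ => (0:ℤ)) :=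
    ⟨Nat.zero_le _, fun i => ⟨le_refl _, by norm_num⟩⟩
  exact le_iSup
    (fun νk : {νk : ℕ × (Fin d → ℤ) // νk.1 ≤ j ∧ inUnitCube d νk.1 νk.2} =>
      (2 : ℝ≥0∞) ^ ((d : ℝ) * ((j : ℝ) - (νk.1.1 : ℝ)) * (1 / u2 - 1 / p2)) *
        (∑' m : {m : Fin d → ℤ // cubeSub d j νk.1.1 m νk.1.2},
          ((‖z m.1‖₊ : ℝ≥0∞)) ^ p2) ^ (1 / p2))
    ⟨((0:ℕ), fun _ => (0:ℤ)), h0⟩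

lemma sep_bound {d j : ℕ} {u1 p1 u2 p2 : ℝ} (hp2 : 0 < p2)
    {ι : Type} [Fintype ι] (x : ι → (Fin d → ℤ) → ℂ) {kk : ℕ}
    (hcard : 2 ^ (kk - 1) < Fintype.card ι)
    (hnorm : ∀ f, mNorm d u1 p1 j (x f) ≤ 1) (s : ℝ≥0∞)
    (hsep : ∀ f g, f ≠ g → s ≤ LL d u2 p2 j (x f - x g))
    (ε : ℝ≥0∞)
    (cen : Fin (2 ^ (kk - 1)) → (Fin d → ℤ) → ℂ)
    (hcen : ∀ y, mNorm d u1 p1 j y ≤ 1 → ∃ i, mNorm d u2 p2 j (y - cen i) ≤ ε) :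
    s ≤ (2:ℝ≥0∞)^((1:ℝ) + 1/p2) * ε := by
  classical
  have hch : ∀ f, ∃ i, mNorm d u2 p2 j (x f - cen i) ≤ ε := fun f => hcen (x f) (hnorm f)
  choose φ hφ using hch
  obtain ⟨f, g, hfg, hsame⟩ := Fintype.exists_ne_map_eq_of_card_lt φ (by simpa using hcard)
  set W := (2:ℝ≥0∞) ^ ((d : ℝ) * ((j : ℝ) - (((0:ℕ)):ℝ)) * (1/u2 - 1/p2)) with hWdef
  set T := fun z : (Fin d → ℤ) → ℂ =>
    (∑' m : {m : Fin d → ℤ // cubeSub d j 0 m (fun _ => 0)}, ((‖z m.1‖₊ : ℝ≥0∞)) ^ p2) with hTdef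
  have hLL : ∀ z, LL d u2 p2 j z = W * (T z) ^ (1/p2) := fun z => rfl
  have hW0 : W ≠ 0 := two_rpow_ne_zero _
  have hWt : W ≠ ⊤ := two_rpow_ne_top _
  have hbound : ∀ z, LL d u2 p2 j z ≤ ε → T z ≤ (W⁻¹ * ε) ^ p2 := by
    intro z hz
    rw [hLL] at hz
    have h1 : (T z) ^ (1/p2) ≤ W⁻¹ * ε := by
      have := mul_le_mul_right hz W⁻¹
      rwa [← mul_assoc, ENNReal.inv_mul_cancel hW0 hWt, one_mul] at this
    calc T z = ((T z) ^ (1/p2)) ^ p2 := by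
          rw [← ENNReal.rpow_mul, one_div, inv_mul_cancel₀ hp2.ne', ENNReal.rpow_one]
      _ ≤ (W⁻¹ * ε) ^ p2 := ENNReal.rpow_le_rpow h1 hp2.le
  have hf1 : T (x f - cen (φ f)) ≤ (W⁻¹ * ε) ^ p2 :=
    hbound _ (le_trans (LL_le_mNorm d u2 p2 j _) (hφ f))
  have hg1 : T (x g - cen (φ f)) ≤ (W⁻¹ * ε) ^ p2 := by
    rw [hsame]
    exact hbound _ (le_trans (LL_le_mNorm d u2 p2 j _) (hφ g))
  have htri : ∀ m : Fin d → ℤ, (‖(x f - x g) m‖₊ : ℝ≥0∞) ≤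
      (‖(x f - cen (φ f)) m‖₊ : ℝ≥0∞) + (‖(x g - cen (φ f)) m‖₊ : ℝ≥0∞) := by
    intro m
    have he : (x f - x g) m = (x f - cen (φ f)) m - (x g - cen (φ f)) m := by
      simp [sub_sub_sub_cancel_right]
    rw [he, ← ENNReal.coe_add, ENNReal.coe_le_coe]
    exact nnnorm_sub_le _ _
  have hT2 : T (x f - x g) ≤ (2:ℝ≥0∞)^(p2 + 1) * (W⁻¹ * ε) ^ p2 := by
    calc T (x f - x g)
        ≤ ∑' m : {m : Fin d → ℤ // cubeSub d j 0 m (fun _ => 0)},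
            ((2:ℝ≥0∞)^p2 * (((‖(x f - cen (φ f)) m.1‖₊ : ℝ≥0∞))^p2 +
              ((‖(x g - cen (φ f)) m.1‖₊ : ℝ≥0∞))^p2)) := by
          refine ENNReal.tsum_le_tsum fun m => ?_
          exact le_trans (ENNReal.rpow_le_rpow (htri m.1) hp2.le)
            (add_rpow_le_two_rpow _ _ hp2)
      _ = (2:ℝ≥0∞)^p2 * (T (x f - cen (φ f)) + T (x g - cen (φ f))) := by
          rw [ENNReal.tsum_mul_left, ENNReal.tsum_add]
      _ ≤ (2:ℝ≥0∞)^p2 * ((W⁻¹ * ε) ^ p2 + (W⁻¹ * ε) ^ p2) :=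
          mul_le_mul_right (add_le_add hf1 hg1) _
      _ = (2:ℝ≥0∞)^(p2+1) * (W⁻¹ * ε) ^ p2 := by
          rw [two_rpow_add p2 1, ENNReal.rpow_one, ← two_mul]
          ring
  calc s ≤ LL d u2 p2 j (x f - x g) := hsep f g hfg
    _ = W * (T (x f - x g)) ^ (1/p2) := hLL _
    _ ≤ W * ((2:ℝ≥0∞)^(p2 + 1) * (W⁻¹ * ε) ^ p2) ^ (1/p2) :=
        mul_le_mul_right (ENNReal.rpow_le_rpow hT2 (by positivity)) _
    _ = (2:ℝ≥0∞)^((1:ℝ) + 1/p2) * ε := by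
        rw [ENNReal.mul_rpow_of_nonneg _ _ (by positivity : (0:ℝ) ≤ 1/p2),
          ← ENNReal.rpow_mul, ← ENNReal.rpow_mul,
          show (p2 + 1) * (1/p2) = 1 + 1/p2 by field_simp,
          show p2 * (1/p2) = 1 by field_simp,
          ENNReal.rpow_one]
        calc W * ((2:ℝ≥0∞)^((1:ℝ) + 1/p2) * (W⁻¹ * ε))
            = (2:ℝ≥0∞)^((1:ℝ) + 1/p2) * ((W * W⁻¹) * ε) := by ring
          _ = (2:ℝ≥0∞)^((1:ℝ) + 1/p2) * ε := by
              rw [ENNReal.mul_inv_cancel hW0 hWt, one_mul]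

lemma nat_two_pow_cast (n : ℕ) : ((2^n : ℕ) : ℝ≥0∞) = (2:ℝ≥0∞)^((n:ℕ):ℝ) := by
  rw [ENNReal.rpow_natCast]; push_cast; rfl

lemma ofReal_two_rpow (r : ℝ) : ENNReal.ofReal ((2:ℝ)^r) = (2:ℝ≥0∞)^r := by
  rw [show ((2:ℝ≥0∞)) = ENNReal.ofReal (2:ℝ) by norm_num, ENNReal.ofReal_rpow_of_pos (by norm_num)]

lemma two_rpow_cancel (c x : ℝ) (ε : ℝ≥0∞) (h : (2:ℝ≥0∞)^x ≤ (2:ℝ≥0∞)^c * ε) :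
    (2:ℝ≥0∞)^(x - c) ≤ ε := by
  have h2 := mul_le_mul_right h ((2:ℝ≥0∞)^(-c))
  rw [← mul_assoc, ← two_rpow_add, ← two_rpow_add, neg_add_cancel, ENNReal.rpow_zero,
    one_mul] at h2
  rw [show x - c = -c + x by ring]
  exact h2

lemma two_rpow_le_one {x : ℝ} (hx : x ≤ 0) : (2:ℝ≥0∞)^x ≤ 1 := by
  calc (2:ℝ≥0∞)^x ≤ (2:ℝ≥0∞)^(0:ℝ) := ENNReal.rpow_le_rpow_of_exponent_le (by norm_num) hx
    _ = 1 := ENNReal.rpow_zero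


noncomputable section
def psiFun (d j μ K : ℕ) (e : Fin K ↪ (Fin d → Fin (2^μ))) : Fin K → (Fin d → ℤ) :=
  fun l i => 2^(j-μ) * (((e l i : ℕ)):ℤ)
end

instance cubeSubDec (d j ν : ℕ) (m k : Fin d → ℤ) : Decidable (cubeSub d j ν m k) :=
  inferInstanceAs (Decidable (∀ i, k i * 2 ^ (j - ν) ≤ m i ∧ m i < (k i + 1) * 2 ^ (j - ν)))

instance inUnitCubeDec (d j : ℕ) (m : Fin d → ℤ) : Decidable (inUnitCube d j m) :=
  inferInstanceAs (Decidable (∀ i, 0 ≤ m i ∧ m i < 2 ^ j))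

lemma psiFun_inj (d j μ K : ℕ) (e : Fin K ↪ (Fin d → Fin (2^μ))) :
    Function.Injective (psiFun d j μ K e) := by
  intro l l' h
  apply e.injective
  funext i
  have hi := congrFun h i
  simp only [psiFun] at hi
  have hP : (0:ℤ) < 2^(j-μ) := by positivity
  have h1 : (((e l i : ℕ)):ℤ) = (((e l' i : ℕ)):ℤ) := mul_left_cancel₀ hP.ne' hi
  have h2 : ((e l i : ℕ)) = ((e l' i : ℕ)) := by exact_mod_cast h1
  exact Fin.ext h2

lemma count_le_one (d j μ ν K : ℕ) (e : Fin K ↪ (Fin d → Fin (2^μ))) (kk : Fin d → ℤ)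
    (hμν : μ ≤ ν) (hνj : ν ≤ j) :
    ((univ : Finset (Fin K)).filter fun l => cubeSub d j ν (psiFun d j μ K e l) kk).card ≤ 1 := by
  refine Finset.card_le_one.2 ?_
  intro l hl l' hl'
  simp only [Finset.mem_filter, Finset.mem_univ, true_and] at hl hl'
  apply psiFun_inj d j μ K e
  funext i
  obtain ⟨h1, h2⟩ := hl i
  obtain ⟨h3, h4⟩ := hl' i
  have hQP : (2:ℤ)^(j-ν) ≤ 2^(j-μ) := pow_le_pow_right₀ (by norm_num) (by omega)
  have hP : (0:ℤ) < 2^(j-μ) := by positivity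
  simp only [psiFun] at h1 h2 h3 h4 ⊢
  have hexp : (kk i + 1)*(2:ℤ)^(j-ν) = kk i * 2^(j-ν) + 2^(j-ν) := by ring
  have key : ∀ a b : ℤ, 2^(j-μ)*a < (kk i + 1)*2^(j-ν) → kk i * 2^(j-ν) ≤ 2^(j-μ)*b →
      a - b < 1 := by
    intro a b hA hB
    have hq2 : 2^(j-μ)*(a-b) < 2^(j-μ)*1 := by rw [mul_sub]; linarith
    exact lt_of_mul_lt_mul_left hq2 hP.le
  have hlt1 := key _ _ h2 h3
  have hlt2 := key _ _ h4 h1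
  have : (((e l i : ℕ)):ℤ) = (((e l' i : ℕ)):ℤ) := by omega
  rw [this]

lemma count_le_pow (d j μ ν K : ℕ) (e : Fin K ↪ (Fin d → Fin (2^μ))) (kk : Fin d → ℤ)
    (hνμ : ν ≤ μ) (hμj : μ ≤ j) :
    ((univ : Finset (Fin K)).filter fun l => cubeSub d j ν (psiFun d j μ K e l) kk).card
      ≤ 2^((μ-ν)*d) := by
  have hRsplit : (2:ℤ)^(j-ν) = 2^(j-μ) * 2^(μ-ν) := by
    rw [← pow_add]; congr 1; omega
  have hP : (0:ℤ) < 2^(j-μ) := by positivity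
  have hRn0 : 0 < 2^(μ-ν) := Nat.two_pow_pos _
  have hRcast : (((2^(μ-ν) : ℕ)):ℤ) = (2:ℤ)^(μ-ν) := by push_cast; rfl
  have hbnd : ∀ (l0 : Fin K), cubeSub d j ν (psiFun d j μ K e l0) kk → ∀ i,
      0 ≤ (((e l0 i : ℕ)):ℤ) - kk i * 2^(μ-ν) ∧
      (((e l0 i : ℕ)):ℤ) - kk i * 2^(μ-ν) < 2^(μ-ν) := by
    intro l0 hc i
    obtain ⟨h1, h2⟩ := hc i
    simp only [psiFun] at h1 h2
    rw [hRsplit] at h1 h2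
    constructor
    · have he : (2:ℤ)^(j-μ) * (kk i * 2^(μ-ν)) = kk i * (2^(j-μ) * 2^(μ-ν)) := by ring
      have h5 : (2:ℤ)^(j-μ) * (kk i * 2^(μ-ν)) ≤ 2^(j-μ) * (((e l0 i : ℕ)):ℤ) := by
        rw [he]; exact h1
      have h6 := le_of_mul_le_mul_left h5 hP
      linarith
    · have he : (2:ℤ)^(j-μ) * ((kk i + 1) * 2^(μ-ν)) = (kk i + 1) * (2^(j-μ) * 2^(μ-ν)) := by ring
      have h5 : (2:ℤ)^(j-μ) * (((e l0 i : ℕ)):ℤ) < 2^(j-μ) * ((kk i + 1) * 2^(μ-ν)) := by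
        rw [he]; exact h2
      have h6 := lt_of_mul_lt_mul_left h5 hP.le
      have hexp : (kk i + 1)*(2:ℤ)^(μ-ν) = kk i * 2^(μ-ν) + 2^(μ-ν) := by ring
      linarith
  calc ((univ : Finset (Fin K)).filter fun l => cubeSub d j ν (psiFun d j μ K e l) kk).card
      ≤ (univ : Finset (Fin d → Fin (2^(μ-ν)))).card := by
        refine Finset.card_le_card_of_injOn
          (fun l => fun i => (⟨((((e l i : ℕ)):ℤ) - kk i * 2^(μ-ν)).toNat % 2^(μ-ν),
            Nat.mod_lt _ hRn0⟩ : Fin (2^(μ-ν)))) (fun l _ => Finset.mem_univ _) ?_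
        intro l hl l' hl' heq
        simp only [Finset.coe_filter, Finset.mem_univ, true_and, Set.mem_setOf_eq] at hl hl'
        apply psiFun_inj d j μ K e
        funext i
        have hi := congrFun heq i
        simp only [Fin.mk.injEq] at hi
        obtain ⟨ha1, ha2⟩ := hbnd l hl i
        obtain ⟨hb1, hb2⟩ := hbnd l' hl' i
        simp only [psiFun]
        have hmod : ∀ z : ℤ, 0 ≤ z → z < (2:ℤ)^(μ-ν) → z.toNat % 2^(μ-ν) = z.toNat := by
          intro z hz0 hzlt
          apply Nat.mod_eq_of_lt
          omega
        rw [hmod _ ha1 ha2, hmod _ hb1 hb2] at hi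
        have : (((e l i : ℕ)):ℤ) = (((e l' i : ℕ)):ℤ) := by omega
        rw [this]
    _ = 2^((μ-ν)*d) := by
        rw [Finset.card_univ, Fintype.card_fun, Fintype.card_fin, Fintype.card_fin, ← pow_mul]

lemma term_le_one (E eexp q : ℝ) (hq : 0 < q) (T : ℝ≥0∞) (hT : T ≤ (2:ℝ≥0∞)^eexp)
    (hexp : E + eexp*(1/q) ≤ 0) : (2:ℝ≥0∞)^E * T^(1/q) ≤ 1 := by
  calc (2:ℝ≥0∞)^E * T^(1/q) ≤ (2:ℝ≥0∞)^E * ((2:ℝ≥0∞)^eexp)^(1/q) :=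
        mul_le_mul_right (ENNReal.rpow_le_rpow hT (by positivity)) _
    _ = (2:ℝ≥0∞)^(E + eexp*(1/q)) := by rw [← ENNReal.rpow_mul, ← two_rpow_add]
    _ ≤ 1 := two_rpow_le_one hexp


set_option maxHeartbeats 2000000 in
lemma main_case (d : ℕ) (hd : 1 ≤ d) (u1 p1 u2 p2 : ℝ)
    (hp1 : 0 < p1) (hp1u1 : p1 ≤ u1) (hp2 : 0 < p2) (hp2u2 : p2 ≤ u2)
    (hβ : 0 < 1 - p1/u1) (j : ℕ)
    (hj4 : 4 ≤ ((j:ℝ)*d) * (p1/u1)) (ε : ℝ≥0∞)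
    (cen : Fin (2 ^ (Nat.floor ((2:ℝ) ^ (((j:ℝ)*(d:ℝ)) * (1 - p1/u1))) - 1)) → (Fin d → ℤ) → ℂ)
    (hcen : ∀ y, mNorm d u1 p1 j y ≤ 1 → ∃ i, mNorm d u2 p2 j (y - cen i) ≤ ε) :
    (2:ℝ≥0∞) ^ (((j:ℝ)*(d:ℝ)) * (1/u2 - p1/(u1*p2)) - ((d:ℝ)+4)/p1 - 1/p2) ≤ ε := by
  classical
  revert cen hcen
  have hu1 : 0 < u1 := lt_of_lt_of_le hp1 hp1u1
  have hu2 : 0 < u2 := lt_of_lt_of_le hp2 hp2u2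
  set β : ℝ := 1 - p1/u1 with hβdef
  set t : ℝ := ((j:ℝ)*(d:ℝ)) * β with htdef
  have ht0 : 0 ≤ t := by
    have : (0:ℝ) ≤ (j:ℝ)*(d:ℝ) := by positivity
    exact mul_nonneg this hβ.le
  set k : ℕ := Nat.floor ((2:ℝ) ^ t) with hkdef
  have hk1 : 1 ≤ k := Nat.le_floor (by exact_mod_cast Real.one_le_rpow (by norm_num) ht0)
  have hkle : (k:ℝ) ≤ 2^t := Nat.floor_le (by positivity)
  have hklt : (2:ℝ)^t < (k:ℝ) + 1 := Nat.lt_floor_add_one _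
  intro cen hcen
  obtain ⟨F, hFcard, hFsep⟩ := exists_code k hk1
  -- choice of the level μ
  have hex : ∃ μ : ℕ, 16*k ≤ 2^(μ*d) := by
    refine ⟨16*k, ?_⟩
    calc 16*k ≤ 2^(16*k) := Nat.lt_two_pow_self.le
      _ ≤ 2^(16*k*d) := Nat.pow_le_pow_right (by norm_num) (Nat.le_mul_of_pos_right _ (by omega))
  set μ : ℕ := Nat.find hex with hμdef
  have hμ16 : 16*k ≤ 2^(μ*d) := Nat.find_spec hex
  have hjd_real : t + 4 ≤ (j:ℝ)*(d:ℝ) := by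
    have hh : ((j:ℝ)*(d:ℝ)) = t + ((j:ℝ)*(d:ℝ))*(p1/u1) := by rw [htdef, hβdef]; ring
    linarith
  have hcast2 : ∀ n : ℕ, ((2^n : ℕ):ℝ) = (2:ℝ)^((n:ℕ):ℝ) := fun n => by
    rw [Real.rpow_natCast]; push_cast; rfl
  have h16k_le : (16*k : ℕ) ≤ 2^(j*d) := by
    have h1 : (16*(k:ℝ)) ≤ 16 * 2^t := by linarith
    have h2 : (16:ℝ) * 2^t = 2^(t+4) := by
      rw [Real.rpow_add (by norm_num)]; norm_num; ring
    have h3 : (2:ℝ)^(t+4) ≤ 2^((j:ℝ)*(d:ℝ)) :=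
      Real.rpow_le_rpow_of_exponent_le (by norm_num) hjd_real
    have h4 : (2:ℝ)^((j:ℝ)*(d:ℝ)) = ((2^(j*d) : ℕ) : ℝ) := by
      rw [hcast2]; push_cast; ring_nf
    have h5 : (16*(k:ℝ)) ≤ ((2^(j*d):ℕ):ℝ) := by rw [← h4]; linarith
    exact_mod_cast h5
  have hμj : μ ≤ j := Nat.find_min' hex h16k_le
  have hμ1 : 1 ≤ μ := by
    by_contra hcon
    push_neg at hcon
    have hμ0 : μ = 0 := by omega
    rw [hμ0] at hμ16
    simp at hμ16
    omega
  have hk1' : (1:ℝ) ≤ (k:ℝ) := by exact_mod_cast hk1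
  have hμlow : t < (μ:ℝ)*(d:ℝ) := by
    have h1 : (2:ℝ)^t < ((2^(μ*d):ℕ):ℝ) := by
      have h0 : (16*(k:ℝ)) ≤ ((2^(μ*d):ℕ):ℝ) := by exact_mod_cast hμ16
      linarith
    rw [hcast2] at h1
    have h2 := (Real.rpow_lt_rpow_left_iff (by norm_num : (1:ℝ) < 2)).1 h1
    push_cast at h2
    linarith
  have hμhigh : (μ:ℝ)*(d:ℝ) ≤ t + 4 + d := by
    have hmin : ¬ (16*k ≤ 2^((μ-1)*d)) := Nat.find_min hex (by omega)
    push_neg at hmin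
    have h1 : ((2^((μ-1)*d):ℕ):ℝ) < 16*(k:ℝ) := by exact_mod_cast hmin
    have h2 : (16:ℝ)*(k:ℝ) ≤ 2^(t+4) := by
      rw [Real.rpow_add (by norm_num)]; norm_num; linarith
    rw [hcast2] at h1
    have h3 := (Real.rpow_lt_rpow_left_iff (by norm_num : (1:ℝ) < 2)).1 (lt_of_lt_of_le h1 h2)
    have h4 : ((((μ-1)*d):ℕ):ℝ) = ((μ:ℝ)-1)*(d:ℝ) := by
      push_cast [Nat.cast_sub hμ1]; ring
    rw [h4] at h3
    have hd0 : (0:ℝ) ≤ d := by positivity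
    nlinarith
  -- embedding into the lattice
  have hcard_fun : 16*k ≤ Fintype.card (Fin d → Fin (2^μ)) := by
    rw [Fintype.card_fun, Fintype.card_fin, Fintype.card_fin, ← pow_mul]
    exact hμ16
  obtain ⟨e⟩ := Function.Embedding.nonempty_of_card_le
    (α := Fin (16*k)) (β := Fin d → Fin (2^μ)) (by simpa using hcard_fun)
  set ψ : Fin (16*k) → (Fin d → ℤ) := psiFun d j μ (16*k) e with hψdef
  have hψinj : Function.Injective ψ := psiFun_inj d j μ (16*k) e
  set δ1 : ℝ := 1/p1 - 1/u1 with hδ1def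
  set α1 : ℝ := ((j:ℝ)*(d:ℝ))*δ1 - ((μ:ℝ)*(d:ℝ))/p1 with hα1def
  set a' : ℝ := (2:ℝ)^α1 with ha'def
  have ha'pos : 0 < a' := Real.rpow_pos_of_pos (by norm_num) _
  set sgn : Bool → ℝ := fun b => if b then 1 else -1 with hsgndef
  have hsgnabs : ∀ b, |sgn b| = 1 := by intro b; cases b <;> simp [hsgndef]
  set x : (Fin (16*k) → Bool) → (Fin d → ℤ) → ℂ :=
    fun f m => ∑ l : Fin (16*k), if ψ l = m then ((a' * sgn (f l) : ℝ) : ℂ) else 0 with hxdef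
  have hxval : ∀ f l0, x f (ψ l0) = ((a' * sgn (f l0) : ℝ) : ℂ) := by
    intro f l0
    rw [hxdef]
    simp only []
    rw [Finset.sum_eq_single l0]
    · rw [if_pos rfl]
    · intro b _ hb; rw [if_neg (fun h => hb (hψinj h))]
    · intro h; exact absurd (Finset.mem_univ _) h
  have hxzero : ∀ f m, (∀ l, ψ l ≠ m) → x f m = 0 := by
    intro f m hm; rw [hxdef]; exact Finset.sum_eq_zero (fun l _ => if_neg (hm l))
  set A : ℝ≥0∞ := (2:ℝ≥0∞)^α1 with hAdef
  have hofA : ENNReal.ofReal a' = A := by rw [ha'def, hAdef, ofReal_two_rpow]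
  have hxnorm : ∀ f m, ((‖x f m‖₊ : ℝ≥0∞)) ≤ A := by
    intro f m
    by_cases hm : ∃ l, ψ l = m
    · obtain ⟨l, rfl⟩ := hm
      rw [hxval, ← ofReal_norm_eq_coe_nnnorm, ← hofA]
      apply ENNReal.ofReal_le_ofReal
      rw [Complex.norm_real, Real.norm_eq_abs, abs_mul, hsgnabs, mul_one, abs_of_pos ha'pos]
    · push_neg at hm
      rw [hxzero f m hm]
      simp
  -- upper bound for the tsum
  have hTbound : ∀ f ν (kk : Fin d → ℤ),
      (∑' m : {m : Fin d → ℤ // cubeSub d j ν m kk}, ((‖x f m.1‖₊:ℝ≥0∞))^p1)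
        ≤ ((((univ : Finset (Fin (16*k))).filter fun l =>
            cubeSub d j ν (ψ l) kk).card : ℕ) : ℝ≥0∞) * A^p1 := by
    intro f ν kk
    have hsupp : ∀ m, cubeSub d j ν m kk → ((‖x f m‖₊:ℝ≥0∞))^p1 ≠ 0 →
        m ∈ ((univ : Finset (Fin (16*k))).filter fun l => cubeSub d j ν (ψ l) kk).image ψ := by
      intro m hP hne
      have hxne : x f m ≠ 0 := by
        intro h0
        apply hne
        rw [h0]
        simp only [nnnorm_zero, ENNReal.coe_zero]
        exact ENNReal.zero_rpow_of_pos hp1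
      obtain ⟨l, hl⟩ : ∃ l, ψ l = m := by
        by_contra hc; push_neg at hc; exact hxne (hxzero f m hc)
      exact Finset.mem_image.2 ⟨l, Finset.mem_filter.2 ⟨Finset.mem_univ _,
        by rw [hl]; exact hP⟩, hl⟩
    have hB : ∀ m, ((‖x f m‖₊:ℝ≥0∞))^p1 ≤ A^p1 :=
      fun m => ENNReal.rpow_le_rpow (hxnorm f m) hp1.le
    have h := myTsum_subtype_le (fun m => cubeSub d j ν m kk)
      (fun m => ((‖x f m‖₊:ℝ≥0∞))^p1)
      (((univ : Finset (Fin (16*k))).filter fun l => cubeSub d j ν (ψ l) kk).image ψ)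
      hsupp (A^p1) hB
    exact le_trans h (mul_le_mul_left (Nat.cast_le.2 Finset.card_image_le) _)
  have hApow : A^p1 = (2:ℝ≥0∞)^(α1*p1) := by rw [hAdef, ← ENNReal.rpow_mul]
  have hd0 : (0:ℝ) ≤ (d:ℝ) := by positivity
  have hnorm1 : ∀ f, mNorm d u1 p1 j (x f) ≤ 1 := by
    intro f
    refine iSup_le ?_
    rintro ⟨⟨ν, kk⟩, hνj, hcube⟩
    rcases le_total ν μ with hνμ | hμν
    · refine term_le_one _ (((((μ-ν)*d : ℕ)):ℝ) + α1*p1) p1 hp1 _ ?_ ?_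
      · refine le_trans (hTbound f ν kk) ?_
        rw [two_rpow_add, hApow]
        refine mul_le_mul_left ?_ _
        calc ((((univ : Finset (Fin (16*k))).filter fun l =>
              cubeSub d j ν (ψ l) kk).card : ℕ) : ℝ≥0∞)
            ≤ (((2^((μ-ν)*d) : ℕ)) : ℝ≥0∞) := by
              exact_mod_cast Nat.cast_le.2 (count_le_pow d j μ ν (16*k) e kk hνμ hμj)
          _ = (2:ℝ≥0∞)^((((μ-ν)*d : ℕ)):ℝ) := nat_two_pow_cast _
      · have hc : ((((μ-ν)*d : ℕ)):ℝ) = ((μ:ℝ)-(ν:ℝ))*(d:ℝ) := by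
          push_cast [Nat.cast_sub hνμ]; ring
        rw [hc]
        have hid : (d:ℝ) * ((j:ℝ) - (ν:ℝ)) * (1/u1 - 1/p1) +
            (((μ:ℝ)-(ν:ℝ))*(d:ℝ) + α1*p1)*(1/p1) = -(((ν:ℝ)*(d:ℝ))/u1) := by
          rw [hα1def, hδ1def]; field_simp; ring
        rw [hid]
        have hpos : (0:ℝ) ≤ ((ν:ℝ)*(d:ℝ))/u1 := by positivity
        linarith
    · refine term_le_one _ (α1*p1) p1 hp1 _ ?_ ?_
      · refine le_trans (hTbound f ν kk) ?_
        rw [hApow]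
        calc ((((univ : Finset (Fin (16*k))).filter fun l =>
              cubeSub d j ν (ψ l) kk).card : ℕ) : ℝ≥0∞) * (2:ℝ≥0∞)^(α1*p1)
            ≤ 1 * (2:ℝ≥0∞)^(α1*p1) := by
              refine mul_le_mul_left ?_ _
              exact_mod_cast Nat.cast_le.2 (count_le_one d j μ ν (16*k) e kk hμν hνj)
          _ = (2:ℝ≥0∞)^(α1*p1) := one_mul _
      · have h1 : (α1*p1)*(1/p1) = α1 := by field_simp
        rw [h1]
        have hident : (d:ℝ)*((j:ℝ)-(ν:ℝ))*(1/u1-1/p1) + α1 =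
            (ν:ℝ)*(d:ℝ)*δ1 - ((μ:ℝ)*(d:ℝ))/p1 := by
          rw [hα1def, hδ1def]; ring
        rw [hident]
        have hδβ : δ1 = β/p1 := by
          rw [hδ1def, hβdef]
          field_simp
        have hν : (ν:ℝ) ≤ (j:ℝ) := by exact_mod_cast hνj
        have h2 : (ν:ℝ)*(d:ℝ)*β ≤ t := by
          rw [htdef]
          nlinarith [mul_nonneg (mul_nonneg (sub_nonneg.2 hν) hd0) hβ.le]
        have h3 : ((ν:ℝ)*(d:ℝ)*β)/p1 ≤ ((μ:ℝ)*(d:ℝ))/p1 :=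
          (div_le_div_iff_of_pos_right hp1).2 (le_trans h2 hμlow.le)
        have h4 : (ν:ℝ)*(d:ℝ)*δ1 = ((ν:ℝ)*(d:ℝ)*β)/p1 := by rw [hδβ]; ring
        linarith
  -- the lattice points lie in the unit cube (level-0 cube)
  have hcube0 : ∀ l, cubeSub d j 0 (ψ l) (fun _ => 0) := by
    intro l i
    have hn : (((e l i : ℕ)):ℤ) < 2^μ := by exact_mod_cast (e l i).2
    have hn0 : (0:ℤ) ≤ (((e l i : ℕ)):ℤ) := by positivity
    have h3 : (2:ℤ)^(j-μ) * 2^μ = 2^j := by rw [← pow_add]; congr 1; omega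
    constructor
    · show (0:ℤ) * 2^(j-0) ≤ ψ l i
      rw [zero_mul]
      simp only [hψdef, psiFun]
      positivity
    · show ψ l i < ((0:ℤ) + 1) * 2^(j-0)
      simp only [hψdef, psiFun]
      have h2 : (2:ℤ)^(j-μ) * (((e l i : ℕ)):ℤ) < 2^(j-μ) * 2^μ :=
        mul_lt_mul_of_pos_left hn (by positivity)
      rw [h3] at h2
      calc (2:ℤ)^(j-μ) * (((e l i : ℕ)):ℤ) < 2^j := h2
        _ ≤ ((0:ℤ) + 1) * 2^(j-0) := by norm_num
  -- separation of the code points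
  have hsep : ∀ f g : {f // f ∈ F}, f ≠ g →
      (2:ℝ≥0∞)^((d:ℝ) * ((j:ℝ) - (((0:ℕ)):ℝ)) * (1/u2 - 1/p2) + (t + (1+α1)*p2)*(1/p2))
        ≤ LL d u2 p2 j (x f.1 - x g.1) := by
    rintro f g hne
    have hfg : f.1 ≠ g.1 := fun h => hne (Subtype.ext h)
    have hD : k + 1 ≤ hammingDist f.1 g.1 := hFsep f.1 f.2 g.1 g.2 hfg
    rw [hammingDist_eq_card] at hD
    have hval : ∀ l, f.1 l ≠ g.1 l →
        ((‖(x f.1 - x g.1) (ψ l)‖₊ : ℝ≥0∞))^p2 = (2:ℝ≥0∞)^((1+α1)*p2) := by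
      intro l hl
      have hv : (x f.1 - x g.1) (ψ l) = ((a' * (sgn (f.1 l) - sgn (g.1 l)) : ℝ) : ℂ) := by
        simp only [Pi.sub_apply, hxval]
        push_cast
        ring
      have habs : |sgn (f.1 l) - sgn (g.1 l)| = 2 := by
        have hs1 : sgn true = 1 := rfl
        have hs2 : sgn false = -1 := rfl
        cases hb : f.1 l <;> cases hb' : g.1 l
        · exact absurd (hb.trans hb'.symm) hl
        · rw [hs2, hs1]; norm_num
        · rw [hs1, hs2]; norm_num
        · exact absurd (hb.trans hb'.symm) hl
      have hnrm : ‖(x f.1 - x g.1) (ψ l)‖ = a' * 2 := by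
        rw [hv, Complex.norm_real, Real.norm_eq_abs, abs_mul, habs, abs_of_pos ha'pos]
      have h2 : ((‖(x f.1 - x g.1) (ψ l)‖₊ : ℝ≥0∞)) = (2:ℝ≥0∞)^((1:ℝ)+α1) := by
        rw [← ofReal_norm_eq_coe_nnnorm, hnrm,
          show a' * 2 = (2:ℝ)^((1:ℝ)+α1) by
            rw [ha'def, Real.rpow_add (by norm_num), Real.rpow_one]; ring]
        exact ofReal_two_rpow _
      rw [h2, ← ENNReal.rpow_mul]
    have hsum : (2:ℝ≥0∞)^(t + (1+α1)*p2) ≤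
        ∑' m : {m : Fin d → ℤ // cubeSub d j 0 m (fun _ => 0)},
          ((‖(x f.1 - x g.1) m.1‖₊ : ℝ≥0∞))^p2 := by
      set Df := (univ : Finset (Fin (16*k))).filter (fun l => f.1 l ≠ g.1 l) with hDfdef
      have hinj2 : ∀ a ∈ Df, ∀ b ∈ Df,
          (⟨ψ a, hcube0 a⟩ : {m : Fin d → ℤ // cubeSub d j 0 m (fun _ => 0)}) = ⟨ψ b, hcube0 b⟩ →
            a = b := by
        intro a _ b _ hab
        exact hψinj (congrArg Subtype.val hab)
      have hsum1 := ENNReal.sum_le_tsum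
        (f := fun m : {m : Fin d → ℤ // cubeSub d j 0 m (fun _ => 0)} =>
          ((‖(x f.1 - x g.1) m.1‖₊ : ℝ≥0∞))^p2)
        (Df.image (fun l => ⟨ψ l, hcube0 l⟩))
      refine le_trans ?_ hsum1
      rw [Finset.sum_image hinj2]
      have heach : ∀ l ∈ Df, ((‖(x f.1 - x g.1) (ψ l)‖₊:ℝ≥0∞))^p2 = (2:ℝ≥0∞)^((1+α1)*p2) :=
        fun l hl => hval l ((Finset.mem_filter.1 hl).2)
      rw [Finset.sum_congr rfl heach, Finset.sum_const, nsmul_eq_mul, two_rpow_add]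
      refine mul_le_mul_left ?_ _
      calc (2:ℝ≥0∞)^t ≤ (((k+1 : ℕ)):ℝ≥0∞) := by
            rw [← ofReal_two_rpow, ← ENNReal.ofReal_natCast]
            apply ENNReal.ofReal_le_ofReal
            push_cast
            linarith
        _ ≤ (Df.card : ℝ≥0∞) := by exact_mod_cast Nat.cast_le.2 hD
    rw [two_rpow_add]
    show (2:ℝ≥0∞)^((d:ℝ) * ((j:ℝ) - (((0:ℕ)):ℝ)) * (1/u2 - 1/p2)) *
        (2:ℝ≥0∞)^((t + (1+α1)*p2)*(1/p2)) ≤ LL d u2 p2 j (x f.1 - x g.1)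
    unfold LL
    refine mul_le_mul_right ?_ _
    rw [ENNReal.rpow_mul]
    exact ENNReal.rpow_le_rpow hsum (by positivity)
  -- pigeonhole
  have hcard2 : 2^(k-1) < Fintype.card {f // f ∈ F} := by
    rw [Fintype.card_coe]; exact hFcard
  have hfin := sep_bound (u1 := u1) (p1 := p1) hp2
    (fun f : {f // f ∈ F} => x f.1) hcard2 (fun f => hnorm1 f.1)
    ((2:ℝ≥0∞)^((d:ℝ) * ((j:ℝ) - (((0:ℕ)):ℝ)) * (1/u2 - 1/p2) + (t + (1+α1)*p2)*(1/p2)))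
    hsep ε cen hcen
  have hfin2 := two_rpow_cancel ((1:ℝ)+1/p2) _ ε hfin
  refine le_trans ?_ hfin2
  apply ENNReal.rpow_le_rpow_of_exponent_le (by norm_num)
  have hexp1 : (t + (1+α1)*p2)*(1/p2) = t*(1/p2) + 1 + α1 := by field_simp; ring
  have hE2t : (d:ℝ)*((j:ℝ)-(((0:ℕ)):ℝ))*(1/u2-1/p2) + t*(1/p2)
      = ((j:ℝ)*(d:ℝ))*(1/u2 - p1/(u1*p2)) := by
    rw [htdef, hβdef]
    push_cast
    field_simp
    try ring
    try exact Or.inl trivial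
  have hjdδ : ((j:ℝ)*(d:ℝ))*δ1 = t/p1 := by
    rw [htdef, hβdef, hδ1def]
    field_simp
    try ring
    try exact Or.inl trivial
  have hdivμ : ((μ:ℝ)*(d:ℝ))/p1 ≤ (t+4+(d:ℝ))/p1 := (div_le_div_iff_of_pos_right hp1).2 hμhigh
  have hα1ge : -(((d:ℝ)+4)/p1) ≤ α1 := by
    rw [hα1def, hjdδ]
    have hq : t/p1 - (t+4+(d:ℝ))/p1 = -(((d:ℝ)+4)/p1) := by
      field_simp
      ring
    linarith [hdivμ]
  linarith [hexp1, hE2t, hα1ge]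

set_option maxHeartbeats 1000000 in
lemma small_case (d : ℕ) (u1 p1 u2 p2 : ℝ)
    (hp1 : 0 < p1) (hp1u1 : p1 ≤ u1) (hp2 : 0 < p2) (j kk : ℕ) (ε : ℝ≥0∞)
    (cen : Fin (2 ^ (kk - 1)) → (Fin d → ℤ) → ℂ)
    (hcen : ∀ y, mNorm d u1 p1 j y ≤ 1 → ∃ i, mNorm d u2 p2 j (y - cen i) ≤ ε) :
    (2:ℝ≥0∞) ^ ((d:ℝ) * ((j:ℝ) - (((0:ℕ)):ℝ)) * (1/u2 - 1/p2) - (((kk-1 : ℕ)):ℝ) - (1 + 1/p2))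
      ≤ ε := by
  classical
  have hu1 : 0 < u1 := lt_of_lt_of_le hp1 hp1u1
  set c : ℝ := (((kk-1 : ℕ)):ℝ) with hcdef
  have hc0 : 0 ≤ c := by positivity
  set b : ℝ := (2:ℝ)^(-c) with hbdef
  have hb0 : 0 < b := Real.rpow_pos_of_pos (by norm_num) _
  set pt0 : Fin d → ℤ := fun _ => 0 with hpt0def
  set y : Fin (2^(kk-1)+1) → (Fin d → ℤ) → ℂ :=
    fun l m => if m = pt0 then ((((l:ℕ):ℝ) * b : ℝ) : ℂ) else 0 with hydef
  have hyval : ∀ l, y l pt0 = ((((l:ℕ):ℝ) * b : ℝ) : ℂ) := fun l => if_pos rfl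
  have hynorm : ∀ l m, ‖y l m‖ ≤ 1 := by
    intro l m
    simp only [hydef]
    by_cases hm : m = pt0
    · rw [if_pos hm, Complex.norm_real, Real.norm_eq_abs,
        abs_of_nonneg (by positivity)]
      have hl : ((l:ℕ):ℝ) ≤ ((2^(kk-1) : ℕ):ℝ) := by
        exact_mod_cast Nat.le_of_lt_succ l.2
      have h2 : ((2^(kk-1) : ℕ):ℝ) = (2:ℝ)^c := by
        rw [hcdef, Real.rpow_natCast]; push_cast; ring
      calc ((l:ℕ):ℝ) * b ≤ (2:ℝ)^c * b := by
            apply mul_le_mul_of_nonneg_right _ hb0.le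
            rw [← h2]; exact hl
        _ = 1 := by rw [hbdef, ← Real.rpow_add (by norm_num)]; simp
    · rw [if_neg hm]; simp
  have hnorm1 : ∀ l, mNorm d u1 p1 j (y l) ≤ 1 := by
    intro l
    refine iSup_le ?_
    rintro ⟨⟨ν, kk'⟩, hνj, hcube⟩
    refine term_le_one _ 0 p1 hp1 _ ?_ ?_
    · rw [ENNReal.rpow_zero]
      have h := myTsum_subtype_le (fun m => cubeSub d j ν m kk')
        (fun m => ((‖y l m‖₊:ℝ≥0∞))^p1) ({pt0} : Finset (Fin d → ℤ)) ?_ 1 ?_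
      · simpa using h
      · intro m _ hne
        have : y l m ≠ 0 := by
          intro h0; apply hne
          simp [h0, ENNReal.zero_rpow_of_pos hp1]
        simp only [hydef] at this
        by_cases hm : m = pt0
        · simp [hm]
        · exact absurd (if_neg hm) this
      · intro m
        apply ENNReal.rpow_le_one _ hp1.le
        rw [← ofReal_norm_eq_coe_nnnorm]
        calc ENNReal.ofReal ‖y l m‖ ≤ ENNReal.ofReal 1 := ENNReal.ofReal_le_ofReal (hynorm l m)
          _ = 1 := by norm_num
    · have h1 : (d:ℝ) * ((j:ℝ) - (ν:ℝ)) * (1/u1 - 1/p1) ≤ 0 := by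
        apply mul_nonpos_of_nonneg_of_nonpos
        · have : (ν:ℝ) ≤ (j:ℝ) := by exact_mod_cast hνj
          have : (0:ℝ) ≤ (j:ℝ) - (ν:ℝ) := by linarith
          positivity
        · have := one_div_le_one_div_of_le hp1 hp1u1
          linarith
      linarith
  have hcube00 : cubeSub d j 0 pt0 (fun _ => 0) := by
    intro i
    constructor
    · simp [hpt0def]
    · show pt0 i < ((0:ℤ)+1) * 2^(j-0)
      simp only [hpt0def]
      positivity
  have hsep : ∀ l l' : Fin (2^(kk-1)+1), l ≠ l' →
      (2:ℝ≥0∞)^((d:ℝ) * ((j:ℝ) - (((0:ℕ)):ℝ)) * (1/u2 - 1/p2) + (-c*p2)*(1/p2))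
        ≤ LL d u2 p2 j (y l - y l') := by
    intro l l' hll'
    have hne2 : (l:ℕ) ≠ (l':ℕ) := fun h => hll' (Fin.ext h)
    have hint : (1:ℤ) ≤ |((l:ℕ):ℤ) - ((l':ℕ):ℤ)| :=
      Int.one_le_abs (sub_ne_zero.2 (by exact_mod_cast hne2))
    have hreal : (1:ℝ) ≤ |((l:ℕ):ℝ) - ((l':ℕ):ℝ)| := by exact_mod_cast hint
    have hval : (y l - y l') pt0 = (((((l:ℕ):ℝ) - ((l':ℕ):ℝ)) * b : ℝ) : ℂ) := by
      simp only [Pi.sub_apply, hyval]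
      push_cast
      ring
    have hnrm : b ≤ ‖(y l - y l') pt0‖ := by
      rw [hval, Complex.norm_real, Real.norm_eq_abs, abs_mul, abs_of_pos hb0]
      nlinarith
    have hterm : (2:ℝ≥0∞)^(-c*p2) ≤ ((‖(y l - y l') pt0‖₊:ℝ≥0∞))^p2 := by
      have h1 : (2:ℝ≥0∞)^(-c) ≤ ((‖(y l - y l') pt0‖₊:ℝ≥0∞)) := by
        rw [← ofReal_norm_eq_coe_nnnorm, ← ofReal_two_rpow]
        exact ENNReal.ofReal_le_ofReal (le_trans (le_of_eq hbdef.symm) hnrm)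
      calc (2:ℝ≥0∞)^(-c*p2) = ((2:ℝ≥0∞)^(-c))^p2 := by rw [← ENNReal.rpow_mul]
        _ ≤ _ := ENNReal.rpow_le_rpow h1 hp2.le
    have hsum : (2:ℝ≥0∞)^(-c*p2) ≤
        ∑' m : {m : Fin d → ℤ // cubeSub d j 0 m (fun _ => 0)},
          ((‖(y l - y l') m.1‖₊ : ℝ≥0∞))^p2 := by
      refine le_trans ?_ (ENNReal.sum_le_tsum
        ({⟨pt0, hcube00⟩} : Finset {m : Fin d → ℤ // cubeSub d j 0 m (fun _ => 0)}))
      rw [Finset.sum_singleton]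
      exact hterm
    rw [two_rpow_add]
    show (2:ℝ≥0∞)^((d:ℝ) * ((j:ℝ) - (((0:ℕ)):ℝ)) * (1/u2 - 1/p2)) *
        (2:ℝ≥0∞)^((-c*p2)*(1/p2)) ≤ LL d u2 p2 j (y l - y l')
    unfold LL
    refine mul_le_mul_right ?_ _
    rw [ENNReal.rpow_mul]
    exact ENNReal.rpow_le_rpow hsum (by positivity)
  have hcard2 : 2^(kk-1) < Fintype.card (Fin (2^(kk-1)+1)) := by
    rw [Fintype.card_fin]; omega
  have hfin := sep_bound (u1 := u1) (p1 := p1) hp2 y hcard2 hnorm1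
    ((2:ℝ≥0∞)^((d:ℝ) * ((j:ℝ) - (((0:ℕ)):ℝ)) * (1/u2 - 1/p2) + (-c*p2)*(1/p2)))
    hsep ε cen hcen
  have hfin2 := two_rpow_cancel ((1:ℝ)+1/p2) _ ε hfin
  refine le_trans ?_ hfin2
  apply ENNReal.rpow_le_rpow_of_exponent_le (by norm_num)
  have h3 : (-c*p2)*(1/p2) = -c := by field_simp
  linarith [h3]


set_option maxHeartbeats 1000000 in
theorem stmt18 (d : ℕ) (hd : 1 ≤ d) (u1 p1 u2 p2 : ℝ)
    (hp1 : 0 < p1) (hp1u1 : p1 ≤ u1) (hp2 : 0 < p2) (hp2u2 : p2 ≤ u2)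
    (h1 : p1 < p2) (h2 : p1 / u1 < p2 / u2) :
    ∃ c : ℝ, 0 < c ∧ ∀ j : ℕ, 1 ≤ j →
      ENNReal.ofReal c * (2 : ℝ≥0∞) ^ (((j : ℝ) * d) * (1 / u2 - p1 / (u1 * p2))) ≤
        entropyNumber (mNorm d u1 p1 j) (mNorm d u2 p2 j) (Nat.floor ((2 : ℝ) ^ (((j : ℝ) * d) * (1 - p1 / u1)))) := by
  classical
  have hu1 : 0 < u1 := lt_of_lt_of_le hp1 hp1u1
  have hu2 : 0 < u2 := lt_of_lt_of_le hp2 hp2u2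
  have hβ : 0 < 1 - p1/u1 := by
    have h3 : p2/u2 ≤ 1 := (div_le_one hu2).2 hp2u2
    have h4 := lt_of_lt_of_le h2 h3
    linarith
  set αv : ℝ := 1/u2 - p1/(u1*p2) with hαdef
  set j₀ : ℕ := max 1 (Nat.ceil (4*u1/p1)) with hj0def
  set cInf : ℝ := (2:ℝ)^(-(((d:ℝ)+4)/p1 + 1/p2)) with hcInfdef
  set cB : ℕ → ℝ := fun j => (2:ℝ)^((d:ℝ) * ((j:ℝ) - (((0:ℕ)):ℝ)) * (1/u2 - 1/p2)
      - (((Nat.floor ((2:ℝ) ^ (((j:ℝ)*(d:ℝ)) * (1 - p1/u1))) - 1 : ℕ)):ℝ) - (1 + 1/p2)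
      - ((j:ℝ)*(d:ℝ))*αv) with hcBdef
  have hne : (Finset.range j₀).Nonempty := ⟨0, by simp [hj0def]⟩
  set cmin : ℝ := (Finset.range j₀).inf' hne cB with hcmindef
  refine ⟨min cInf cmin, ?_, ?_⟩
  · apply lt_min
    · rw [hcInfdef]; positivity
    · rw [hcmindef, Finset.lt_inf'_iff]
      intro i _
      rw [hcBdef]
      positivity
  · intro j hj
    rw [entropyNumber]
    apply le_sInf
    rintro ε ⟨hε0, cen, hcen⟩
    by_cases hcase : (4:ℝ) ≤ ((j:ℝ)*(d:ℝ)) * (p1/u1)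
    · have hmc := main_case d hd u1 p1 u2 p2 hp1 hp1u1 hp2 hp2u2 hβ j hcase ε cen hcen
      refine le_trans ?_ hmc
      calc ENNReal.ofReal (min cInf cmin) * (2:ℝ≥0∞)^(((j:ℝ)*(d:ℝ))*αv)
          ≤ ENNReal.ofReal cInf * (2:ℝ≥0∞)^(((j:ℝ)*(d:ℝ))*αv) :=
            mul_le_mul_left (ENNReal.ofReal_le_ofReal (min_le_left _ _)) _
        _ = (2:ℝ≥0∞)^(-(((d:ℝ)+4)/p1 + 1/p2)) * (2:ℝ≥0∞)^(((j:ℝ)*(d:ℝ))*αv) := by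
            rw [hcInfdef, ofReal_two_rpow]
        _ = (2:ℝ≥0∞)^(((j:ℝ)*(d:ℝ))*αv - ((d:ℝ)+4)/p1 - 1/p2) := by
            rw [← two_rpow_add]; congr 1; ring
    · have hsc := small_case d u1 p1 u2 p2 hp1 hp1u1 hp2 j _ ε cen hcen
      refine le_trans ?_ hsc
      have hjmem : j ∈ Finset.range j₀ := by
        rw [Finset.mem_range]
        push_neg at hcase
        by_contra hge
        push_neg at hge
        have h1' : (4*u1/p1 : ℝ) ≤ j := by
          refine le_trans (Nat.le_ceil _) ?_
          exact_mod_cast le_trans (le_max_right 1 _) hge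
        have hd1 : (1:ℝ) ≤ (d:ℝ) := by exact_mod_cast hd
        have hj0' : (0:ℝ) ≤ (j:ℝ) := by positivity
        have h2' : (j:ℝ) ≤ (j:ℝ)*(d:ℝ) := by nlinarith
        have hpu : 0 < p1/u1 := div_pos hp1 hu1
        have h3' : (4*u1/p1) * (p1/u1) = 4 := by field_simp
        have h4' : (4:ℝ) ≤ (j:ℝ) * (p1/u1) := by
          calc (4:ℝ) = (4*u1/p1) * (p1/u1) := h3'.symm
            _ ≤ (j:ℝ) * (p1/u1) := mul_le_mul_of_nonneg_right h1' hpu.le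
        have h5' : (j:ℝ)*(p1/u1) ≤ ((j:ℝ)*(d:ℝ))*(p1/u1) :=
          mul_le_mul_of_nonneg_right h2' hpu.le
        linarith
      have hcle : min cInf cmin ≤ cB j := le_trans (min_le_right _ _) (Finset.inf'_le cB hjmem)
      calc ENNReal.ofReal (min cInf cmin) * (2:ℝ≥0∞)^(((j:ℝ)*(d:ℝ))*αv)
          ≤ ENNReal.ofReal (cB j) * (2:ℝ≥0∞)^(((j:ℝ)*(d:ℝ))*αv) :=
            mul_le_mul_left (ENNReal.ofReal_le_ofReal hcle) _
        _ = (2:ℝ≥0∞)^((d:ℝ) * ((j:ℝ) - (((0:ℕ)):ℝ)) * (1/u2 - 1/p2)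
              - (((Nat.floor ((2:ℝ) ^ (((j:ℝ)*(d:ℝ)) * (1 - p1/u1))) - 1 : ℕ)):ℝ) - (1 + 1/p2)
              - ((j:ℝ)*(d:ℝ))*αv) * (2:ℝ≥0∞)^(((j:ℝ)*(d:ℝ))*αv) := by
            rw [hcBdef, ofReal_two_rpow]
        _ = (2:ℝ≥0∞)^((d:ℝ) * ((j:ℝ) - (((0:ℕ)):ℝ)) * (1/u2 - 1/p2)
              - (((Nat.floor ((2:ℝ) ^ (((j:ℝ)*(d:ℝ)) * (1 - p1/u1))) - 1 : ℕ)):ℝ) - (1 + 1/p2)) := by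
            rw [← two_rpow_add]; congr 1; ring
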